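/- arXiv:1609.01046 — 3 statements merged into one kernel-verified Lean document; each statement's English description precedes it below -/
import Mathlib

section
/- Let n, k, l be positive integers, α, μ > 0 and ρ ∈ ℝ. Let M̃ be a symmetric positive definite real n×n matrix, M a symmetric positive definite real k×k matrix, B, R real n×k matrices, and C₁, C₂ real l×n matrices. Set S := -(1/2) B M⁻¹ Rᵀ + (1/2) R M⁻¹ Bᵀ and A := α M̃ + μ B M⁻¹ Bᵀ + ρ S. Suppose u₁, u₂ ∈ ℝⁿ, p ∈ ℝˡ and F₁, F₂ ∈ ℝⁿ satisfy A u₁ + C₁ᵀ p = F₁, A u₂ + C₂ᵀ p = F₂, and C₁ u₁ + C₂ u₂ = 0. Then α (u₁ᵀ M̃ u₁ + u₂ᵀ M̃ u₂) + μ (u₁ᵀ B M⁻¹ Bᵀ u₁ + u₂ᵀ B M⁻¹ Bᵀ u₂) = F₁ᵀ u₁ + F₂ᵀ u₂. -/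
open Matrix

/-- The algebraic energy identity for the reduced saddle-point system:
if `A u₁ + C₁ᵀ p = F₁`, `A u₂ + C₂ᵀ p = F₂` and `C₁ u₁ + C₂ u₂ = 0`, then
`α (u₁ᵀ M̃ u₁ + u₂ᵀ M̃ u₂) + μ (u₁ᵀ BM⁻¹Bᵀ u₁ + u₂ᵀ BM⁻¹Bᵀ u₂) = F₁ᵀ u₁ + F₂ᵀ u₂`. -/
theorem discrete_energy_identity
    (n k l : ℕ) (hn : 0 < n) (hk : 0 < k) (hl : 0 < l)
    (α μ ρ : ℝ) (hα : 0 < α) (hμ : 0 < μ)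
    (Mt : Matrix (Fin n) (Fin n) ℝ) (M : Matrix (Fin k) (Fin k) ℝ)
    (hMt : Mt.PosDef) (hM : M.PosDef)
    (B R : Matrix (Fin n) (Fin k) ℝ)
    (C₁ C₂ : Matrix (Fin l) (Fin n) ℝ)
    (S A : Matrix (Fin n) (Fin n) ℝ)
    (hS : S = -(1/2 : ℝ) • (B * M⁻¹ * Rᵀ) + (1/2 : ℝ) • (R * M⁻¹ * Bᵀ))
    (hA : A = α • Mt + μ • (B * M⁻¹ * Bᵀ) + ρ • S)
    (u₁ u₂ F₁ F₂ : Fin n → ℝ) (p : Fin l → ℝ)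
    (h1 : A *ᵥ u₁ + C₁ᵀ *ᵥ p = F₁)
    (h2 : A *ᵥ u₂ + C₂ᵀ *ᵥ p = F₂)
    (h3 : C₁ *ᵥ u₁ + C₂ *ᵥ u₂ = 0) :
    α * (u₁ ⬝ᵥ (Mt *ᵥ u₁) + u₂ ⬝ᵥ (Mt *ᵥ u₂))
        + μ * (u₁ ⬝ᵥ ((B * M⁻¹ * Bᵀ) *ᵥ u₁) + u₂ ⬝ᵥ ((B * M⁻¹ * Bᵀ) *ᵥ u₂))
      = F₁ ⬝ᵥ u₁ + F₂ ⬝ᵥ u₂ := by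
  have hMsymm : Mᵀ = M := (by simpa using hM.isHermitian : M.IsSymm)
  have hMinv : (M⁻¹)ᵀ = M⁻¹ := by rw [Matrix.transpose_nonsing_inv, hMsymm]
  have hST : Sᵀ = -S := by
    rw [hS]
    simp [transpose_add, transpose_smul, transpose_mul, hMinv, transpose_transpose,
      Matrix.mul_assoc]
  have hSu : ∀ u : Fin n → ℝ, u ⬝ᵥ (S *ᵥ u) = 0 := by
    intro u
    have h : u ⬝ᵥ (S *ᵥ u) = u ⬝ᵥ (Sᵀ *ᵥ u) := by
      rw [mulVec_transpose, dotProduct_mulVec, dotProduct_comm]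
    rw [hST] at h
    simp [neg_mulVec] at h
    linarith
  have key : ∀ u F : Fin n → ℝ, ∀ C : Matrix (Fin l) (Fin n) ℝ,
      A *ᵥ u + Cᵀ *ᵥ p = F →
      F ⬝ᵥ u = α * (u ⬝ᵥ (Mt *ᵥ u)) + μ * (u ⬝ᵥ ((B * M⁻¹ * Bᵀ) *ᵥ u))
        + p ⬝ᵥ (C *ᵥ u) := by
    intro u F C hF
    rw [← hF, add_dotProduct]
    have e1 : (A *ᵥ u) ⬝ᵥ u = α * (u ⬝ᵥ (Mt *ᵥ u)) + μ * (u ⬝ᵥ ((B * M⁻¹ * Bᵀ) *ᵥ u)) := by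
      rw [dotProduct_comm, hA]
      simp [add_mulVec, smul_mulVec, dotProduct_add, dotProduct_smul, hSu, smul_eq_mul]
    have e2 : (Cᵀ *ᵥ p) ⬝ᵥ u = p ⬝ᵥ (C *ᵥ u) := by
      rw [mulVec_transpose, ← dotProduct_mulVec]
    rw [e1, e2]
  have k1 := key u₁ F₁ C₁ h1
  have k2 := key u₂ F₂ C₂ h2
  have hp : p ⬝ᵥ (C₁ *ᵥ u₁) + p ⬝ᵥ (C₂ *ᵥ u₂) = 0 := by
    rw [← dotProduct_add, h3, dotProduct_zero]
  rw [k1, k2]; ring_nf; linarith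
end

section
/- Let O ⊆ ℝ² be an open set, μ > 0, ρ ∈ ℝ, u : O → ℝ a twice continuously differentiable function, and V : O → ℝ² a continuously differentiable vector field with div V = 0 on O. Define w : O → ℝ² by w := √μ ∇u - (ρ/(2√μ)) u V. Then at every point of O, -√μ div w + (ρ/(2√μ)) V·w + (ρ²/(4μ)) u (V·V) = -μ Δu + ρ V·∇u. -/
open scoped BigOperators

/-- The partial derivative of a scalar function on ℝ² in the `i`-th coordinate
direction. -/
noncomputable def pderiv2 (i : Fin 2) (f : EuclideanSpace ℝ (Fin 2) → ℝ)
    (x : EuclideanSpace ℝ (Fin 2)) : ℝ :=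
  fderiv ℝ f x (EuclideanSpace.single i 1)

/-- The splitting identity of the convection-diffusion operator: with
`w = √μ ∇u - (ρ/(2√μ)) u V` and `div V = 0` on an open set `O`, at every point of `O`
one has `-√μ div w + (ρ/(2√μ)) V·w + (ρ²/(4μ)) u (V·V) = -μ Δu + ρ V·∇u`. -/
theorem convection_diffusion_splitting
    (O : Set (EuclideanSpace ℝ (Fin 2))) (hO : IsOpen O)
    (μ ρ : ℝ) (hμ : 0 < μ)
    (u : EuclideanSpace ℝ (Fin 2) → ℝ)
    (V : EuclideanSpace ℝ (Fin 2) → EuclideanSpace ℝ (Fin 2))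
    (hu : ContDiffOn ℝ 2 u O) (hV : ContDiffOn ℝ 1 V O)
    (hdivV : ∀ x ∈ O, ∑ i, pderiv2 i (fun y => V y i) x = 0)
    (w : EuclideanSpace ℝ (Fin 2) → Fin 2 → ℝ)
    (hw : ∀ y i, w y i = Real.sqrt μ * pderiv2 i u y
            - (ρ / (2 * Real.sqrt μ)) * (u y * V y i)) :
    ∀ x ∈ O,
      -Real.sqrt μ * (∑ i, pderiv2 i (fun y => w y i) x)
          + (ρ / (2 * Real.sqrt μ)) * (∑ i, V x i * w x i)
          + (ρ ^ 2 / (4 * μ)) * (u x * ∑ i, V x i * V x i)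
        = -μ * (∑ i, pderiv2 i (fun y => pderiv2 i u y) x)
            + ρ * (∑ i, V x i * pderiv2 i u x) := by
  intro x hx
  set s := Real.sqrt μ with hs
  have hs0 : s ≠ 0 := ne_of_gt (Real.sqrt_pos.mpr hμ)
  have hss : s * s = μ := Real.mul_self_sqrt hμ.le
  set c := ρ / (2 * s) with hc
  have hcs : c * s = ρ / 2 := by rw [hc]; field_simp
  have hcc : c * c = ρ ^ 2 / (4 * μ) := by
    rw [hc, div_mul_div_comm]
    rw [show (2 * s) * (2 * s) = 4 * μ by linear_combination 4 * hss]
    ring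
  have hxO : O ∈ nhds x := hO.mem_nhds hx
  -- differentiability facts
  have hu1 : ContDiffOn ℝ 1 (fderiv ℝ u) O :=
    ((contDiffOn_succ_iff_fderiv_of_isOpen hO).mp (by exact_mod_cast hu)).2.2
  have du : DifferentiableAt ℝ u x :=
    (hu.differentiableOn (by norm_num)).differentiableAt hxO
  have dVi : ∀ i : Fin 2, DifferentiableAt ℝ (fun y => V y i) x := by
    intro i
    have h := (hV.differentiableOn one_ne_zero).differentiableAt hxO
    exact (EuclideanSpace.proj (𝕜 := ℝ) i).differentiableAt.comp x h
  have dpu : ∀ i : Fin 2, DifferentiableAt ℝ (fun y => pderiv2 i u y) x := by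
    intro i
    have hfd : DifferentiableAt ℝ (fderiv ℝ u) x :=
      (hu1.differentiableOn one_ne_zero).differentiableAt hxO
    exact hfd.clm_apply (differentiableAt_const _)
  -- derivative of w components
  have hwder : ∀ i : Fin 2, pderiv2 i (fun y => w y i) x
      = s * pderiv2 i (fun y => pderiv2 i u y) x
        - c * (pderiv2 i u x * V x i + u x * pderiv2 i (fun y => V y i) x) := by
    intro i
    have h1 : (fun y => w y i) = fun y => s * pderiv2 i u y - c * (u y * V y i) :=
      funext fun y => hw y i
    rw [h1]
    simp only [pderiv2]
    simp only [pderiv2] at dpu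
    rw [fderiv_fun_sub ((dpu i).const_mul s) ((du.fun_mul (dVi i)).const_mul c),
      fderiv_const_mul (dpu i), fderiv_const_mul (du.fun_mul (dVi i)), fderiv_fun_mul du (dVi i)]
    simp only [ContinuousLinearMap.sub_apply, ContinuousLinearMap.smul_apply,
      ContinuousLinearMap.add_apply, smul_eq_mul]
    ring
  have hdiv := hdivV x hx
  rw [Fin.sum_univ_two] at hdiv
  simp only [Fin.sum_univ_two]
  rw [hwder 0, hwder 1, hw x 0, hw x 1]
  clear_value s c
  linear_combination
    (-(pderiv2 0 (fun y => pderiv2 0 u y) x + pderiv2 1 (fun y => pderiv2 1 u y) x)) * hss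
    + (2 * (pderiv2 0 u x * V x 0 + pderiv2 1 u x * V x 1)) * hcs
    + (-(u x) * (V x 0 * V x 0 + V x 1 * V x 1)) * hcc
    + (s * c * u x) * hdiv
end

section
/- Let U, W, P be finite-dimensional real inner product spaces, α, μ > 0, ρ ∈ ℝ, and β > 0. Let B : W × U → ℝ, R : W × U → ℝ and b : (U × U) × P → ℝ be bilinear maps, let ‖·‖_Z be a norm on U, and assume the inf-sup condition: for every v ∈ U, β ‖v‖_Z ≤ sup_{ψ ∈ W, ψ ≠ 0} B(ψ, v)/‖ψ‖. Suppose u = (u₁, u₂) ∈ U × U, w, z, w̃, z̃ ∈ W, p ∈ P and F ∈ U × U satisfy: (i) α⟨u, v⟩ + √μ B(w, v₁) + √μ B(z, v₂) + (ρ/(2√μ)) R(w + (ρ/(2√μ)) w̃, v₁) + (ρ/(2√μ)) R(z + (ρ/(2√μ)) z̃, v₂) + b(v, p) = ⟨F, v⟩ for all v = (v₁, v₂) ∈ U × U; (ii) √μ B(ψ, u₁) - (ρ/(2√μ)) ⟨w̃, ψ⟩ = ⟨w, ψ⟩ for all ψ ∈ W; (iii) √μ B(ψ, u₂) - (ρ/(2√μ))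 ⟨z̃, ψ⟩ = ⟨z, ψ⟩ for all ψ ∈ W; (iv) R(ψ, u₁) = ⟨w̃, ψ⟩ for all ψ ∈ W; (v) R(ψ, u₂) = ⟨z̃, ψ⟩ for all ψ ∈ W; (vi) b(u, q) = 0 for all q ∈ P. Then α ⟨u, u⟩ + β² μ (‖u₁‖²_Z + ‖u₂‖²_Z) ≤ ⟨F, u⟩. -/
open scoped RealInnerProductSpace

/-- Abstract form of Lemma 4.1 (basic stability result) of the SDG-IBM paper:
for the discrete SDG system for the linearized Navier-Stokes equations, the solution
satisfies `α⟨u,u⟩ + β²μ(‖u₁‖_Z² + ‖u₂‖_Z²) ≤ ⟨F,u⟩`. -/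
theorem sdg_stability_lemma
    {U W P : Type*}
    [NormedAddCommGroup U] [InnerProductSpace ℝ U] [FiniteDimensional ℝ U]
    [NormedAddCommGroup W] [InnerProductSpace ℝ W] [FiniteDimensional ℝ W]
    [NormedAddCommGroup P] [InnerProductSpace ℝ P] [FiniteDimensional ℝ P]
    (α μ ρ β : ℝ) (hα : 0 < α) (hμ : 0 < μ) (hβ : 0 < β)
    (B R : W →ₗ[ℝ] U →ₗ[ℝ] ℝ)
    (b : (U × U) →ₗ[ℝ] P →ₗ[ℝ] ℝ)
    (Z : U → ℝ)
    (hZ0 : ∀ v : U, Z v = 0 ↔ v = 0)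
    (hZs : ∀ (a : ℝ) (v : U), Z (a • v) = |a| * Z v)
    (hZt : ∀ v₁ v₂ : U, Z (v₁ + v₂) ≤ Z v₁ + Z v₂)
    (hinf : ∀ v : U, β * Z v ≤ ⨆ ψ : {ψ : W // ψ ≠ 0}, B ψ.1 v / ‖ψ.1‖)
    (u₁ u₂ : U) (w z wt zt : W) (p : P) (F₁ F₂ : U)
    (h1 : ∀ v₁ v₂ : U,
      α * (⟪u₁, v₁⟫ + ⟪u₂, v₂⟫)
          + Real.sqrt μ * B w v₁ + Real.sqrt μ * B z v₂
          + (ρ / (2 * Real.sqrt μ)) * R (w + (ρ / (2 * Real.sqrt μ)) • wt) v₁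
          + (ρ / (2 * Real.sqrt μ)) * R (z + (ρ / (2 * Real.sqrt μ)) • zt) v₂
          + b (v₁, v₂) p
        = ⟪F₁, v₁⟫ + ⟪F₂, v₂⟫)
    (h2 : ∀ ψ : W, Real.sqrt μ * B ψ u₁ - (ρ / (2 * Real.sqrt μ)) * ⟪wt, ψ⟫ = ⟪w, ψ⟫)
    (h3 : ∀ ψ : W, Real.sqrt μ * B ψ u₂ - (ρ / (2 * Real.sqrt μ)) * ⟪zt, ψ⟫ = ⟪z, ψ⟫)
    (h4 : ∀ ψ : W, R ψ u₁ = ⟪wt, ψ⟫)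
    (h5 : ∀ ψ : W, R ψ u₂ = ⟪zt, ψ⟫)
    (h6 : ∀ q : P, b (u₁, u₂) q = 0) :
    α * (⟪u₁, u₁⟫ + ⟪u₂, u₂⟫) + β ^ 2 * μ * (Z u₁ ^ 2 + Z u₂ ^ 2)
      ≤ ⟪F₁, u₁⟫ + ⟪F₂, u₂⟫ := by
  set s := Real.sqrt μ with hs_def
  have hs : 0 < s := Real.sqrt_pos.mpr hμ
  have hs2 : s * s = μ := Real.mul_self_sqrt hμ.le
  set c := ρ / (2 * s) with hc_def
  set wh := w + c • wt with hwh
  set zh := z + c • zt with hzh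
  -- Z is nonneg
  have hZnn : ∀ v : U, 0 ≤ Z v := by
    intro v
    have h0 : Z (0 : U) = 0 := (hZ0 0).mpr rfl
    have := hZt v (-v)
    rw [show v + -v = (0:U) by abel, h0] at this
    have hneg : Z (-v) = Z v := by
      have := hZs (-1) v
      simpa using this
    linarith [hneg ▸ this]
  -- key representations
  have hBw : ∀ ψ : W, s * B ψ u₁ = ⟪wh, ψ⟫ := by
    intro ψ
    have := h2 ψ
    rw [hwh, inner_add_left, real_inner_smul_left]
    linarith
  have hBz : ∀ ψ : W, s * B ψ u₂ = ⟪zh, ψ⟫ := by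
    intro ψ
    have := h3 ψ
    rw [hzh, inner_add_left, real_inner_smul_left]
    linarith
  -- energy identity
  have energy : α * (⟪u₁, u₁⟫ + ⟪u₂, u₂⟫) + ⟪wh, wh⟫ + ⟪zh, zh⟫ = ⟪F₁, u₁⟫ + ⟪F₂, u₂⟫ := by
    have h := h1 u₁ u₂
    rw [h6 p] at h
    have e1 : s * B w u₁ + c * R wh u₁ = ⟪wh, wh⟫ := by
      have hr : R wh u₁ = ⟪wh, wt⟫ := by rw [h4 wh, real_inner_comm]
      have hx : (⟪wh, wh⟫ : ℝ) = ⟪wh, w⟫ + c * ⟪wh, wt⟫ := by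
        nth_rewrite 2 [hwh]
        rw [inner_add_right, real_inner_smul_right]
      rw [hBw w, hr, hx]
    have e2 : s * B z u₂ + c * R zh u₂ = ⟪zh, zh⟫ := by
      have hr : R zh u₂ = ⟪zh, zt⟫ := by rw [h5 zh, real_inner_comm]
      have hx : (⟪zh, zh⟫ : ℝ) = ⟪zh, z⟫ + c * ⟪zh, zt⟫ := by
        nth_rewrite 2 [hzh]
        rw [inner_add_right, real_inner_smul_right]
      rw [hBz z, hr, hx]
    linarith
  -- inf-sup bounds
  have bound : ∀ (v : U) (g : W), (∀ ψ : W, s * B ψ v = ⟪g, ψ⟫) →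
      β ^ 2 * μ * Z v ^ 2 ≤ ⟪g, g⟫ := by
    intro v g hg
    have hsup : (⨆ ψ : {ψ : W // ψ ≠ 0}, B ψ.1 v / ‖ψ.1‖) ≤ ‖g‖ / s := by
      apply Real.iSup_le
      · rintro ⟨ψ, hψ⟩
        have hψn : 0 < ‖ψ‖ := norm_pos_iff.mpr hψ
        have : s * B ψ v ≤ ‖g‖ * ‖ψ‖ := (hg ψ) ▸ real_inner_le_norm g ψ
        rw [div_le_div_iff₀ hψn hs]
        nlinarith
      · positivity
    have hb1 : β * Z v ≤ ‖g‖ / s := le_trans (hinf v) hsup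
    have hb2 : (β * Z v) ^ 2 ≤ (‖g‖ / s) ^ 2 :=
      pow_le_pow_left₀ (mul_nonneg hβ.le (hZnn v)) hb1 2
    rw [real_inner_self_eq_norm_sq]
    rw [div_pow] at hb2
    have hsμ : s ^ 2 = μ := by rw [pow_two, hs2]
    rw [hsμ] at hb2
    calc β ^ 2 * μ * Z v ^ 2 = (β * Z v) ^ 2 * μ := by ring
      _ ≤ (‖g‖ ^ 2 / μ) * μ := by nlinarith
      _ = ‖g‖ ^ 2 := by field_simp
  have b1 := bound u₁ wh hBw
  have b2 := bound u₂ zh hBz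
  linarith
end
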